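/- Let F = F_{3^n}, and let φ(x) = x^3 + a·x + b with a, b ∈ F and a ≠ 0. Then φ is irreducible over F if and only if -a = c^2 for some c ∈ F and Tr(b/c^3) ≠ 0, where Tr is the absolute trace from F to F_3. -/

import Mathlib

open Polynomial

section Aux

variable {F : Type*} [Field F] [Fintype F]

private lemma neg_tr (n : ℕ) (d : F) :
    ∑ i ∈ Finset.range n, (-d) ^ 3 ^ i = -∑ i ∈ Finset.range n, d ^ 3 ^ i := by
  rw [← Finset.sum_neg_distrib]
  refine Finset.sum_congr rfl fun i _ => ?_
  exact Odd.neg_pow (Odd.pow ⟨1, by norm_num⟩) d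

private lemma keyA {n : ℕ} (hn : 0 < n) (hF : Fintype.card F = 3 ^ n) [CharP F 3] (d : F) :
    (∃ x : F, x ^ 3 - x = d) ↔ ∑ i ∈ Finset.range n, d ^ 3 ^ i = 0 := by
  classical
  haveI : Fact (Nat.Prime 3) := ⟨by norm_num⟩
  have hT0 : ∀ x : F, ∑ i ∈ Finset.range n, (x ^ 3 - x) ^ 3 ^ i = 0 := by
    intro x
    have h1 : ∀ i, (x ^ 3 - x) ^ 3 ^ i = x ^ 3 ^ (i + 1) - x ^ 3 ^ i := by
      intro i
      rw [sub_pow_char_pow]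
      congr 1
      rw [← pow_mul, ← pow_succ']
    simp only [h1]
    rw [Finset.sum_range_sub (fun i => x ^ 3 ^ i)]
    rw [pow_zero, pow_one, ← hF, FiniteField.pow_card, sub_self]
  constructor
  · rintro ⟨x, rfl⟩; exact hT0 x
  · intro hd
    let f : F →+ F :=
      { toFun := fun x => x ^ 3 - x
        map_zero' := by norm_num
        map_add' := fun x y => by
          show (x + y) ^ 3 - (x + y) = x ^ 3 - x + (y ^ 3 - y)
          rw [add_pow_char]
          ring }
    have hc1 : (1 : F) ≠ -1 := by
      intro h
      have h2 : ((2 : ℕ) : F) = 0 := by push_cast; linear_combination h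
      have := (CharP.cast_eq_zero_iff F 3 2).mp h2
      norm_num at this
    have hker : (f.ker : Set F) = {0, 1, -1} := by
      ext x
      simp only [SetLike.mem_coe, AddMonoidHom.mem_ker, Set.mem_insert_iff,
        Set.mem_singleton_iff]
      show x ^ 3 - x = 0 ↔ _
      constructor
      · intro hx
        have h2 : x * (x - 1) * (x + 1) = 0 := by linear_combination hx
        rcases mul_eq_zero.mp h2 with h | h
        · rcases mul_eq_zero.mp h with h | h
          · exact Or.inl h
          · exact Or.inr (Or.inl (sub_eq_zero.mp h))
        · exact Or.inr (Or.inr (eq_neg_of_add_eq_zero_left h))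
      · rintro (rfl | rfl | rfl) <;> ring
    have hkcard : Nat.card f.ker = 3 := by
      have h1 : Nat.card f.ker = ((f.ker : Set F)).ncard := by
        rw [← Nat.card_coe_set_eq]; rfl
      rw [h1, hker]
      rw [Set.ncard_insert_of_notMem (by
        simp only [Set.mem_insert_iff, Set.mem_singleton_iff]
        push_neg
        exact ⟨zero_ne_one, fun h => one_ne_zero (by linear_combination h)⟩)
        (Set.toFinite _), Set.ncard_pair hc1]
    have hrange3 : Nat.card f.range * 3 = 3 ^ n := by
      have h1 := AddSubgroup.card_eq_card_quotient_mul_card_addSubgroup f.ker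
      have h2 : Nat.card (F ⧸ f.ker) = Nat.card f.range :=
        Nat.card_congr (QuotientAddGroup.quotientKerEquivRange f).toEquiv
      rw [h2, hkcard] at h1
      rw [← h1, Nat.card_eq_fintype_card, hF]
    have hrange : Nat.card f.range = 3 ^ (n - 1) := by
      have h3 : (3 : ℕ) ^ n = 3 ^ (n - 1) * 3 := by
        rw [← pow_succ, Nat.sub_add_cancel hn]
      rw [h3] at hrange3
      exact mul_right_cancel₀ (by norm_num) hrange3
    -- the kernel of the trace-sum has at most 3^(n-1) elements
    set K : Set F := {x : F | ∑ i ∈ Finset.range n, x ^ 3 ^ i = 0} with hK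
    set P : F[X] := ∑ i ∈ Finset.range n, X ^ 3 ^ i with hP
    have hPne : P ≠ 0 := by
      intro h
      have hco : P.coeff 1 = 1 := by
        rw [hP, finset_sum_coeff]
        simp only [coeff_X_pow]
        rw [Finset.sum_eq_single 0]
        · norm_num
        · intro i _ hi
          rw [if_neg]
          intro h1
          exact hi (by
            have := h1.symm
            have h2 : 3 ^ i = 3 ^ 0 := by simpa using this
            exact Nat.pow_right_injective (by norm_num) h2)
        · intro h0
          exact absurd (Finset.mem_range.mpr hn) h0
      rw [h] at hco
      simp at hco
    have hPdeg : P.natDegree ≤ 3 ^ (n - 1) := by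
      apply Polynomial.natDegree_sum_le_of_forall_le
      intro i hi
      rw [natDegree_X_pow]
      exact Nat.pow_le_pow_right (by norm_num) (Nat.le_pred_of_lt (Finset.mem_range.mp hi))
    have hKsub : K ⊆ (P.roots.toFinset : Set F) := by
      intro x hx
      refine Multiset.mem_toFinset.mpr ((mem_roots hPne).mpr ?_)
      show P.eval x = 0
      rw [hP, eval_finset_sum]
      simpa using (show ∑ i ∈ Finset.range n, x ^ 3 ^ i = 0 from hx)
    have hKcard : K.ncard ≤ 3 ^ (n - 1) := by
      calc K.ncard ≤ ((P.roots.toFinset : Set F)).ncard :=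
            Set.ncard_le_ncard hKsub (Set.toFinite _)
        _ = P.roots.toFinset.card := Set.ncard_coe_finset _
        _ ≤ Multiset.card P.roots := P.roots.toFinset_card_le
        _ ≤ P.natDegree := P.card_roots'
        _ ≤ 3 ^ (n - 1) := hPdeg
    have hsub : (f.range : Set F) ⊆ K := by
      rintro y ⟨x, rfl⟩
      exact hT0 x
    have heq : (f.range : Set F) = K := by
      refine Set.eq_of_subset_of_ncard_le hsub ?_ (Set.toFinite _)
      have h5 : (f.range : Set F).ncard = Nat.card f.range := by
        rw [← Nat.card_coe_set_eq]; rfl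
      rw [h5, hrange]
      exact hKcard
    have hdK : d ∈ K := hd
    rw [← heq] at hdK
    obtain ⟨x, hx⟩ := hdK
    exact ⟨x, hx⟩

end Aux

open Polynomial in
theorem stmt_9 (n : ℕ) (hn : 0 < n)
    (F : Type*) [Field F] [Fintype F] (hF : Fintype.card F = 3 ^ n)
    (a b : F) (ha : a ≠ 0) :
    Irreducible (X ^ 3 + C a * X + C b : F[X]) ↔
      ∃ c : F, -a = c ^ 2 ∧ ∑ i ∈ Finset.range n, (b / c ^ 3) ^ 3 ^ i ≠ 0 := by
  haveI : Fact (Nat.Prime 3) := ⟨by norm_num⟩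
  haveI hchar : CharP F 3 := by
    haveI := ringChar.charP F
    obtain ⟨m, hp, hcard⟩ := FiniteField.card F (ringChar F)
    have hdvd : ringChar F ∣ 3 ^ n := by
      rw [← hF, hcard]
      exact dvd_pow_self _ (by exact_mod_cast m.ne_zero)
    have h3 : ringChar F = 3 :=
      (Nat.prime_dvd_prime_iff_eq hp (by norm_num)).mp (hp.dvd_of_dvd_pow hdvd)
    exact h3 ▸ ringChar.charP F
  set φ : F[X] := X ^ 3 + C a * X + C b with hφ
  have hmonic : φ.Monic := by
    rw [hφ]; monicity!
  have hdeg : φ.natDegree = 3 := by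
    rw [hφ]; compute_degree!
  rw [hmonic.irreducible_iff_roots_eq_zero_of_degree_le_three (by omega) (le_of_eq hdeg)]
  have hroots : ∀ x : F, x ∈ φ.roots ↔ x ^ 3 + a * x + b = 0 := by
    intro x
    rw [mem_roots hmonic.ne_zero]
    show φ.eval x = 0 ↔ _
    simp [hφ]
  rw [Multiset.eq_zero_iff_forall_notMem]
  simp only [hroots]
  constructor
  · intro hnoroot
    by_cases hsq : ∃ c : F, -a = c ^ 2
    · obtain ⟨c, hc⟩ := hsq
      have hcne : c ≠ 0 := by
        rintro rfl
        exact ha (by simpa using hc.symm)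
      have ha' : a = -(c ^ 2) := by linear_combination -hc
      refine ⟨c, hc, ?_⟩
      intro hTr
      have hex := (keyA hn hF (-(b / c ^ 3))).mpr (by rw [neg_tr, hTr, neg_zero])
      obtain ⟨y, hy⟩ := hex
      apply hnoroot (c * y)
      have hc3 : c ^ 3 ≠ 0 := pow_ne_zero _ hcne
      have h6 : (c * y) ^ 3 + a * (c * y) + b = c ^ 3 * (y ^ 3 - y) + b := by
        rw [ha']; ring
      rw [h6, hy]
      field_simp
      ring
    · exfalso
      have hinj : Function.Injective (fun x : F => x ^ 3 + a * x) := by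
        intro x y hxy
        simp only at hxy
        have hcube : (x - y) ^ 3 = x ^ 3 - y ^ 3 := sub_pow_char x y
        have h1 : (x - y) * ((x - y) ^ 2 + a) = 0 := by
          have : (x - y) ^ 3 + a * (x - y) = 0 := by
            rw [hcube]; linear_combination hxy
          linear_combination this
        rcases mul_eq_zero.mp h1 with h | h
        · exact sub_eq_zero.mp h
        · exact absurd ⟨x - y, by linear_combination -h⟩ hsq
      obtain ⟨x, hx⟩ := Finite.injective_iff_surjective.mp hinj (-b)
      simp only at hx
      exact hnoroot x (by linear_combination hx)
  · rintro ⟨c, hc, hTr⟩ x hx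
    have hcne : c ≠ 0 := by
      rintro rfl
      exact ha (by simpa using hc.symm)
    have ha' : a = -(c ^ 2) := by linear_combination -hc
    have hc3 : c ^ 3 ≠ 0 := pow_ne_zero _ hcne
    apply hTr
    have hx' : x ^ 3 - c ^ 2 * x + b = 0 := by
      rw [ha'] at hx; linear_combination hx
    have hy : (x / c) ^ 3 - x / c = -(b / c ^ 3) := by
      field_simp
      linear_combination hx'
    have h7 := (keyA hn hF (-(b / c ^ 3))).mp ⟨x / c, hy⟩
    rw [neg_tr] at h7
    exact neg_eq_zero.mp h7
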